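/- Let 𝔸 be a linearly ordered Z₂-graded alphabet, λ a partition, and λ^π its 180°-rotation (anti-normal shape). For T an 𝔸-semistandard tableau of shape λ^π and a ∈ 𝔸, the reverse column insertion T ← a (defined by: in the right-most column, if |a| = 0 replace the largest entry ≤ a by a, if |a| = 1 replace the largest entry < a by a, bump the replaced entry into the next column to the left; if no such entry exists, place a on top of the column and stop) produces an 𝔸-semistandard tableau of an anti-normal shape μ^π where μ is a partition with λ ⊂ μ and |μ| = |λ| + 1. -/

import Mathlib

/-- A partition: a weakly decreasing sequence of naturals with finite support. -/
structure Ptn where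
  f : ℕ → ℕ
  mono : ∀ i, f (i + 1) ≤ f i
  fin : ∃ N, ∀ i, N ≤ i → f i = 0

/-- The `j`-th part (1-indexed) of the conjugate of the sequence `g`. -/
noncomputable def conjSeq (g : ℕ → ℕ) (j : ℕ) : ℕ := Set.ncard {i : ℕ | j ≤ g i}

section AntiNormal

variable {A : Type*} [LinearOrder A] [Inhabited A]

/-- The relation between an entry and the one just below it in a column:
weakly increasing, with equality allowed only for odd letters (`pr x = true`). -/
def colRel (pr : A → Bool) (x y : A) : Prop := x ≤ y ∧ (x = y → pr x = true)

/-- The relation between an entry and an entry to its right in a row: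
weakly increasing, with equality allowed only for even letters (`pr x = false`). -/
def rowRel (pr : A → Bool) (x y : A) : Prop := x ≤ y ∧ (x = y → pr x = false)

/-- The entry of a column (listed top-to-bottom) at height `r` from the bottom. -/
def bottomGet (l : List A) (r : ℕ) : A := l.getD (l.length - 1 - r) default

/-- An anti-normal (bottom-justified) semistandard tableau, given by its columns
`c 0, c 1, …` enumerated from the right, each listed top-to-bottom. -/
def IsAntiSSYT (pr : A → Bool) (c : ℕ → List A) : Prop :=
  (∀ j, (c j).Chain' (colRel pr)) ∧
  (∀ j r, r < (c (j + 1)).length → r < (c j).length →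
    rowRel pr (bottomGet (c (j + 1)) r) (bottomGet (c j) r))

/-- The columns `c` have the anti-normal shape `λ^π`: the `j`-th column from the right has
length `λ'_j`. -/
def hasShapePi (p : Ptn) (c : ℕ → List A) : Prop :=
  ∀ j, (c j).length = conjSeq p.f (j + 1)

/-- The bumping condition: for even `a` we bump the largest entry `≤ a`, for odd `a` the
largest entry `< a`. -/
def bumpCond (pr : A → Bool) (a x : A) : Bool :=
  if pr a then decide (x < a) else decide (x ≤ a)

/-- The last (bottom-most) index of the column satisfying the bumping condition. -/
def lastIdx (l : List A) (pb : A → Bool) : Option ℕ :=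
  ((List.range l.length).filter fun i => pb (l.getD i default)).max?

/-- Reverse column insertion (with fuel), starting at column `j`. -/
def insertAux (pr : A → Bool) : ℕ → (ℕ → List A) → ℕ → A → (ℕ → List A)
  | 0, c, _, _ => c
  | fuel + 1, c, j, a =>
    match lastIdx (c j) (bumpCond pr a) with
    | none => Function.update c j (a :: c j)
    | some i =>
        insertAux pr fuel (Function.update c j ((c j).set i a)) (j + 1) ((c j).getD i default)

/-- Reverse column insertion `T ← a` for a tableau of anti-normal shape `λ^π`. -/
def colInsert (pr : A → Bool) (p : Ptn) (c : ℕ → List A) (a : A) : ℕ → List A :=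
  insertAux pr (p.f 0 + 2) c 0 a

section Helpers

variable {A : Type*} [LinearOrder A] [Inhabited A] {pr : A → Bool}


lemma ncard_Iio (n : ℕ) : (Set.Iio n).ncard = n := by
  rw [← Finset.coe_range, Set.ncard_coe_finset, Finset.card_range]

lemma set_fin {g : ℕ → ℕ} {J : ℕ} (hJ : ∀ j, J ≤ j → g j = 0) (i : ℕ) :
    {j | i + 1 ≤ g j}.Finite := by
  apply (Set.finite_Iio J).subset
  intro j hj
  simp only [Set.mem_setOf_eq] at hj
  by_contra hc
  have := hJ j (by simpa [Set.mem_Iio] using hc)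
  omega

lemma conj_iff {g : ℕ → ℕ} (hmono : ∀ i, g (i + 1) ≤ g i) {J : ℕ}
    (hJ : ∀ j, J ≤ j → g j = 0) (i j : ℕ) :
    j + 1 ≤ conjSeq g (i + 1) ↔ i + 1 ≤ g j := by
  have ha : Antitone g := antitone_nat_of_succ_le hmono
  constructor
  · intro h
    by_contra hc
    have hgj : g j ≤ i := by omega
    have hsub : {k | i + 1 ≤ g k} ⊆ Set.Iio j := by
      intro k hk
      simp only [Set.mem_setOf_eq] at hk
      by_contra hkj
      have : g k ≤ g j := ha (by simpa [Set.mem_Iio] using hkj)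
      omega
    have := Set.ncard_le_ncard hsub (Set.finite_Iio j)
    rw [ncard_Iio] at this
    unfold conjSeq at h
    omega
  · intro h
    have hsub : Set.Iio (j + 1) ⊆ {k | i + 1 ≤ g k} := by
      intro k hk
      simp only [Set.mem_Iio] at hk
      have : g j ≤ g k := ha (by omega)
      simp only [Set.mem_setOf_eq]
      omega
    have := Set.ncard_le_ncard hsub (set_fin hJ i)
    rw [ncard_Iio] at this
    exact this

lemma conj_dual {g : ℕ → ℕ} (hmono : ∀ i, g (i + 1) ≤ g i) {J : ℕ}
    (hJ : ∀ j, J ≤ j → g j = 0) (j : ℕ) :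
    conjSeq (fun i => conjSeq g (i + 1)) (j + 1) = g j := by
  have hset : {i | j + 1 ≤ conjSeq g (i + 1)} = Set.Iio (g j) := by
    ext i
    simp only [Set.mem_setOf_eq, Set.mem_Iio]
    rw [conj_iff hmono hJ]
    omega
  show Set.ncard _ = _
  rw [show {i | j + 1 ≤ (fun i => conjSeq g (i+1)) i} = {i | j + 1 ≤ conjSeq g (i + 1)} from rfl,
    hset, ncard_Iio]

lemma sum_conj (g : ℕ → ℕ) (J N : ℕ) (hJ : ∀ j, J ≤ j → g j = 0) (hN : ∀ j, g j ≤ N) :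
    ∑ i ∈ Finset.range N, Set.ncard {j | i + 1 ≤ g j} = ∑ j ∈ Finset.range J, g j := by
  have hcard : ∀ i, Set.ncard {j | i + 1 ≤ g j}
      = ((Finset.range J).filter fun j => i + 1 ≤ g j).card := by
    intro i
    rw [← Set.ncard_coe_finset]
    congr 1
    ext j
    simp only [Set.mem_setOf_eq, Finset.coe_filter, Finset.mem_range]
    constructor
    · intro h
      refine ⟨?_, h⟩
      by_contra hc
      have := hJ j (by omega)
      omega
    · exact fun h => h.2
  calc ∑ i ∈ Finset.range N, Set.ncard {j | i + 1 ≤ g j}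
      = ∑ i ∈ Finset.range N, ∑ j ∈ Finset.range J, if i + 1 ≤ g j then 1 else 0 := by
        refine Finset.sum_congr rfl fun i _ => ?_
        rw [hcard i, Finset.card_filter]
    _ = ∑ j ∈ Finset.range J, ∑ i ∈ Finset.range N, if i + 1 ≤ g j then 1 else 0 :=
        Finset.sum_comm
    _ = ∑ j ∈ Finset.range J, g j := by
        refine Finset.sum_congr rfl fun j _ => ?_
        have : ∑ i ∈ Finset.range N, (if i + 1 ≤ g j then 1 else 0)
            = ((Finset.range N).filter fun i => i + 1 ≤ g j).card := by
          rw [Finset.card_filter]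
        rw [this]
        have : (Finset.range N).filter (fun i => i + 1 ≤ g j) = Finset.range (g j) := by
          ext i
          simp only [Finset.mem_filter, Finset.mem_range]
          have := hN j
          omega
        rw [this, Finset.card_range]

end Helpers
section ListHelpers

variable {A : Type*} [LinearOrder A] [Inhabited A] {pr : A → Bool}

lemma chain'_getD {R : A → A → Prop} {l : List A} (h : l.Chain' R) {k : ℕ}
    (hk : k + 1 < l.length) : R (l.getD k default) (l.getD (k + 1) default) := by
  rw [List.getD_eq_getElem _ _ (by omega), List.getD_eq_getElem _ _ hk]
  have := List.isChain_iff_getElem.mp h k (by omega)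
  simpa using this

lemma chain'_of_getD {R : A → A → Prop} {l : List A}
    (h : ∀ k, k + 1 < l.length → R (l.getD k default) (l.getD (k + 1) default)) :
    l.Chain' R := by
  show List.IsChain R l
  rw [List.isChain_iff_getElem]
  intro i hi
  have := h i (by omega)
  rw [List.getD_eq_getElem _ _ (by omega), List.getD_eq_getElem _ _ (by omega)] at this
  simpa using this

lemma chain_le {l : List A} (h : l.Chain' (colRel pr)) {i k : ℕ} (hik : i ≤ k)
    (hk : k < l.length) : l.getD i default ≤ l.getD k default := by
  have hle : l.Chain' (· ≤ ·) := h.imp fun {x y} hxy => hxy.1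
  have hp : l.Pairwise (· ≤ ·) := List.isChain_iff_pairwise.mp hle
  rcases eq_or_lt_of_le hik with rfl | hlt
  · rfl
  · rw [List.getD_eq_getElem _ _ (by omega), List.getD_eq_getElem _ _ hk]
    have := List.pairwise_iff_get.mp hp ⟨i, by omega⟩ ⟨k, hk⟩ hlt
    simpa using this

lemma chain_eq_pr {l : List A} (h : l.Chain' (colRel pr)) {i k : ℕ} (hik : i < k)
    (hk : k < l.length) (he : l.getD i default = l.getD k default) :
    pr (l.getD i default) = true := by
  have h1 : colRel pr (l.getD i default) (l.getD (i + 1) default) :=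
    chain'_getD h (by omega)
  have h2 : l.getD (i + 1) default ≤ l.getD k default := chain_le h (by omega) hk
  exact h1.2 (le_antisymm h1.1 (he ▸ h2))

lemma getD_set' {l : List A} {i k : ℕ} {a : A} (hk : k < l.length) :
    (l.set i a).getD k default = if i = k then a else l.getD k default := by
  rw [List.getD_eq_getElem _ _ (by simpa using hk), List.getD_eq_getElem _ _ hk]
  rcases eq_or_ne i k with rfl | hne
  · simp [List.getElem_set, hk]
  · simp [List.getElem_set, hne]

lemma bottomGet_set {l : List A} {i r : ℕ} {a : A} (hi : i < l.length) (hr : r < l.length) :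
    bottomGet (l.set i a) r =
      if r = l.length - 1 - i then a else bottomGet l r := by
  unfold bottomGet
  rw [List.length_set]
  rw [getD_set' (by omega)]
  rcases eq_or_ne r (l.length - 1 - i) with rfl | hne
  · rw [if_pos (by omega), if_pos rfl]
  · rw [if_neg (by omega), if_neg hne]

lemma bottomGet_cons_lt {l : List A} {a : A} {r : ℕ} (hr : r < l.length) :
    bottomGet (a :: l) r = bottomGet l r := by
  unfold bottomGet
  have h1 : (a :: l).length - 1 - r = (l.length - 1 - r) + 1 := by
    simp only [List.length_cons]; omega
  rw [h1, List.getD_cons_succ]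

lemma bottomGet_cons_top {l : List A} {a : A} :
    bottomGet (a :: l) l.length = a := by
  unfold bottomGet
  have h1 : (a :: l).length - 1 - l.length = 0 := by
    simp only [List.length_cons]; omega
  rw [h1, List.getD_cons_zero]

lemma lastIdx_some {l : List A} {pb : A → Bool} {i : ℕ} (h : lastIdx l pb = some i) :
    i < l.length ∧ pb (l.getD i default) = true ∧
      (∀ k, k < l.length → pb (l.getD k default) = true → k ≤ i) := by
  unfold lastIdx at h
  have hiff := List.max?_eq_some_iff (xs := (List.range l.length).filter fun i => pb (l.getD i default))
    (a := i)
  rw [hiff] at h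
  obtain ⟨hmem, hle⟩ := h
  simp only [List.mem_filter, List.mem_range] at hmem
  refine ⟨hmem.1, hmem.2, fun k hk hpk => ?_⟩
  exact hle k (by simp only [List.mem_filter, List.mem_range]; exact ⟨hk, hpk⟩)

lemma lastIdx_none {l : List A} {pb : A → Bool} (h : lastIdx l pb = none) :
    ∀ k, k < l.length → pb (l.getD k default) = false := by
  unfold lastIdx at h
  rw [List.max?_eq_none_iff] at h
  intro k hk
  by_contra hc
  have hmem : k ∈ (List.range l.length).filter fun i => pb (l.getD i default) := by
    simp only [List.mem_filter, List.mem_range]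
    exact ⟨hk, by simpa using hc⟩
  rw [h] at hmem
  simp at hmem

lemma rowRel_of_bump {a x : A} (h : bumpCond pr a x = true) : rowRel pr x a := by
  unfold bumpCond at h
  by_cases hpa : pr a
  · rw [if_pos hpa] at h
    have : x < a := by simpa using h
    exact ⟨le_of_lt this, fun he => absurd he (ne_of_lt this)⟩
  · rw [if_neg hpa] at h
    have : x ≤ a := by simpa using h
    exact ⟨this, fun he => by rw [he]; simpa using hpa⟩

lemma colRel_of_not_bump {a x : A} (h : bumpCond pr a x = false) : colRel pr a x := by
  unfold bumpCond at h
  by_cases hpa : pr a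
  · rw [if_pos hpa] at h
    have : a ≤ x := by simpa using h
    exact ⟨this, fun _ => by simpa using hpa⟩
  · rw [if_neg hpa] at h
    have : a < x := by simpa using h
    exact ⟨le_of_lt this, fun he => absurd he (ne_of_lt this)⟩

lemma bump_of_rowRel {a x : A} (h : rowRel pr x a) : bumpCond pr a x = true := by
  unfold bumpCond
  by_cases hpa : pr a
  · rw [if_pos hpa]
    rcases lt_or_eq_of_le h.1 with hlt | he
    · simpa using hlt
    · have := h.2 he
      rw [he] at this
      rw [this] at hpa
      simp at hpa
  · rw [if_neg hpa]
    simpa using h.1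

end ListHelpers
set_option linter.unusedSectionVars false
set_option maxHeartbeats 1000000

section MainLemma

variable {A : Type*} [LinearOrder A] [Inhabited A]

lemma insert_main (pr : A → Bool) :
    ∀ (fuel : ℕ) (c : ℕ → List A) (j : ℕ) (a : A),
    1 ≤ fuel →
    c (j + (fuel - 1)) = [] →
    (∀ k, (c k).Chain' (colRel pr)) →
    (∀ k r, r < (c (k + 1)).length → r < (c k).length →
      rowRel pr (bottomGet (c (k + 1)) r) (bottomGet (c k) r)) →
    (∀ k, (c (k + 1)).length ≤ (c k).length) →
    (∀ j', j = j' + 1 → ∃ r₀, r₀ < (c j').length ∧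
      (∀ r, r ≤ r₀ → rowRel pr a (bottomGet (c j') r)) ∧
      (r₀ < (c j).length → rowRel pr (bottomGet (c j) r₀) a)) →
    ∃ j₀, j ≤ j₀ ∧
      (∀ k, k ≠ j₀ → ((insertAux pr fuel c j a) k).length = (c k).length) ∧
      ((insertAux pr fuel c j a) j₀).length = (c j₀).length + 1 ∧
      (∀ k, ((insertAux pr fuel c j a) k).Chain' (colRel pr)) ∧
      (∀ k r, r < ((insertAux pr fuel c j a) (k + 1)).length →
        r < ((insertAux pr fuel c j a) k).length →
        rowRel pr (bottomGet ((insertAux pr fuel c j a) (k + 1)) r)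
          (bottomGet ((insertAux pr fuel c j a) k) r)) ∧
      (∀ k, ((insertAux pr fuel c j a) (k + 1)).length ≤ ((insertAux pr fuel c j a) k).length) := by
  intro fuel
  induction fuel with
  | zero => intro c j a h1; omega
  | succ f ih =>
    intro c j a _ hE hcol hrow hdec hprev
    rcases hL : lastIdx (c j) (bumpCond pr a) with _ | i
    · -- no entry to bump: prepend a on top of column j
      have hins : insertAux pr (f + 1) c j a = Function.update c j (a :: c j) := by
        simp only [insertAux, hL]
      have hnone := lastIdx_none hL
      -- if j = j' + 1 then (c j).length ≤ r₀ for the r₀ provided by hprev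
      have hlen_le : ∀ r₀, (r₀ < (c j).length → rowRel pr (bottomGet (c j) r₀) a) →
          (c j).length ≤ r₀ := by
        intro r₀ hiii
        by_contra hc
        have hr : r₀ < (c j).length := by omega
        have hb := bump_of_rowRel (hiii hr)
        have := hnone ((c j).length - 1 - r₀) (by omega)
        rw [show bottomGet (c j) r₀ = (c j).getD ((c j).length - 1 - r₀) default from rfl] at hb
        rw [this] at hb
        simp at hb
      rw [hins]
      refine ⟨j, le_rfl, ?_, ?_, ?_, ?_, ?_⟩
      · intro k hk; rw [Function.update_of_ne hk]
      · rw [Function.update_self]; simp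
      · intro k
        rcases eq_or_ne k j with rfl | hk
        · rw [Function.update_self]
          cases hc : c k with
          | nil => exact List.IsChain.singleton a
          | cons y t =>
            show List.IsChain _ _
            rw [List.isChain_cons_cons]
            constructor
            · have h0 : (c k).getD 0 default = y := by rw [hc]; rfl
              have := colRel_of_not_bump (a := a) (x := y)
                (by rw [← h0]; exact hnone 0 (by rw [hc]; simp))
              exact this
            · rw [← hc]; exact hcol k
        · rw [Function.update_of_ne hk]; exact hcol k
      · intro k r hr1 hr2
        by_cases hk1 : k + 1 = j
        · have hkj : k ≠ j := by omega
          rw [hk1, Function.update_self] at hr1 ⊢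
          rw [Function.update_of_ne hkj] at hr2 ⊢
          obtain ⟨r₀, hr₀len, hii, hiii⟩ := hprev k hk1.symm
          have hle := hlen_le r₀ hiii
          simp only [List.length_cons] at hr1
          rcases lt_or_eq_of_le (show r ≤ (c j).length by omega) with hrlt | hre
          · rw [bottomGet_cons_lt hrlt]
            have := hrow k r (by rw [hk1]; exact hrlt) hr2
            rw [hk1] at this; exact this
          · rw [hre, bottomGet_cons_top]
            exact hii (c j).length (by omega)
        · by_cases hk2 : k = j
          · subst hk2
            rw [Function.update_of_ne hk1] at hr1 ⊢
            rw [Function.update_self] at hr2 ⊢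
            have hrk : r < (c k).length := lt_of_lt_of_le hr1 (hdec k)
            rw [bottomGet_cons_lt hrk]
            exact hrow k r hr1 hrk
          · rw [Function.update_of_ne hk1] at hr1 ⊢
            rw [Function.update_of_ne hk2] at hr2 ⊢
            exact hrow k r hr1 hr2
      · intro k
        by_cases hk1 : k + 1 = j
        · have hkj : k ≠ j := by omega
          rw [hk1, Function.update_self, Function.update_of_ne hkj]
          obtain ⟨r₀, hr₀len, hii, hiii⟩ := hprev k hk1.symm
          have hle := hlen_le r₀ hiii
          simp only [List.length_cons]
          omega
        · by_cases hk2 : k = j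
          · subst hk2
            rw [Function.update_of_ne hk1, Function.update_self]
            simp only [List.length_cons]
            have := hdec k
            omega
          · rw [Function.update_of_ne hk1, Function.update_of_ne hk2]
            exact hdec k
    · -- bump the entry at index i
      obtain ⟨hi, hbump, hmax⟩ := lastIdx_some hL
      have hins : insertAux pr (f + 1) c j a
          = insertAux pr f (Function.update c j ((c j).set i a)) (j + 1)
            ((c j).getD i default) := by
        simp only [insertAux, hL]
      set x := (c j).getD i default with hxdef
      set c' := Function.update c j ((c j).set i a) with hc'def
      have hf : 1 ≤ f := by
        by_contra hc
        have hf0 : f = 0 := by omega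
        rw [hf0] at hE
        simp only [Nat.add_sub_cancel, Nat.add_zero] at hE
        rw [hE] at hi
        simp at hi
      have hxa : rowRel pr x a := rowRel_of_bump hbump
      have hcj : c' j = (c j).set i a := Function.update_self _ _ _
      have hlen' : ∀ k, (c' k).length = (c k).length := by
        intro k
        rcases eq_or_ne k j with rfl | hk
        · rw [hcj, List.length_set]
        · rw [hc'def, Function.update_of_ne hk]
      have hbg_i : bottomGet (c j) ((c j).length - 1 - i) = x := by
        show (c j).getD ((c j).length - 1 - ((c j).length - 1 - i)) default = x
        rw [show (c j).length - 1 - ((c j).length - 1 - i) = i by omega]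
      -- hypotheses for the recursive call
      have hE' : c' (j + 1 + (f - 1)) = [] := by
        rw [show j + 1 + (f - 1) = j + f by omega, hc'def,
          Function.update_of_ne (by omega : j + f ≠ j)]
        simpa only [Nat.add_sub_cancel] using hE
      have hcol' : ∀ k, (c' k).Chain' (colRel pr) := by
        intro k
        rcases eq_or_ne k j with rfl | hk
        · rw [hcj]
          apply chain'_of_getD
          intro m hm
          rw [List.length_set] at hm
          rw [getD_set' (by omega), getD_set' (by omega)]
          by_cases him : i = m
          · rw [if_pos him, if_neg (by omega)]
            have hw : bumpCond pr a ((c k).getD (m + 1) default) = false := by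
              by_contra hcc
              have := hmax (m + 1) hm (by simpa using (Bool.not_eq_false _).mp hcc)
              omega
            exact colRel_of_not_bump hw
          · rw [if_neg him]
            by_cases him1 : i = m + 1
            · rw [if_pos him1]
              have hvx : (c k).getD m default ≤ x := by
                rw [hxdef]; exact chain_le (hcol k) (by omega) hi
              refine ⟨le_trans hvx hxa.1, fun he => ?_⟩
              have hvex : (c k).getD m default = x :=
                le_antisymm hvx (by rw [he]; exact hxa.1)
              exact chain_eq_pr (hcol k) (show m < i by omega) hi (by rw [hvex, hxdef])
            · rw [if_neg him1]
              exact chain'_getD (hcol k) hm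
        · rw [hc'def, Function.update_of_ne hk]; exact hcol k
      have hrow' : ∀ k r, r < (c' (k + 1)).length → r < (c' k).length →
          rowRel pr (bottomGet (c' (k + 1)) r) (bottomGet (c' k) r) := by
        intro k r hr1 hr2
        rw [hlen'] at hr1 hr2
        by_cases hk1 : k + 1 = j
        · have hkj : k ≠ j := by omega
          rw [hk1, hcj]
          rw [hc'def, Function.update_of_ne hkj]
          rw [hk1] at hr1
          rw [bottomGet_set hi hr1]
          by_cases hrx : r = (c j).length - 1 - i
          · rw [if_pos hrx]
            obtain ⟨r₀, hr₀len, hii, hiii⟩ := hprev k hk1.symm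
            have hrx_le : (c j).length - 1 - i ≤ r₀ := by
              rcases lt_or_ge r₀ (c j).length with hlt | hge
              · have hb := bump_of_rowRel (hiii hlt)
                rw [show bottomGet (c j) r₀
                    = (c j).getD ((c j).length - 1 - r₀) default from rfl] at hb
                have := hmax ((c j).length - 1 - r₀) (by omega) hb
                omega
              · omega
            exact hii r (by omega)
          · rw [if_neg hrx]
            have := hrow k r (by rw [hk1]; exact hr1) hr2
            rw [hk1] at this; exact this
        · by_cases hk2 : k = j
          · subst hk2
            rw [hc'def, Function.update_of_ne hk1, hcj] at *
            rw [bottomGet_set hi hr2]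
            by_cases hrx : r = (c k).length - 1 - i
            · rw [if_pos hrx]
              have hzx := hrow k r hr1 hr2
              have hself : bottomGet (c k) r = x := by rw [hrx]; exact hbg_i
              rw [hself] at hzx
              refine ⟨le_trans hzx.1 hxa.1, fun he => ?_⟩
              have : bottomGet (c (k + 1)) r = x :=
                le_antisymm hzx.1 (by rw [he]; exact hxa.1)
              exact hzx.2 this
            · rw [if_neg hrx]
              exact hrow k r hr1 hr2
          · rw [hc'def, Function.update_of_ne hk1, Function.update_of_ne hk2]
            exact hrow k r hr1 hr2
      have hdec' : ∀ k, (c' (k + 1)).length ≤ (c' k).length := by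
        intro k; rw [hlen', hlen']; exact hdec k
      have hprev' : ∀ j', j + 1 = j' + 1 → ∃ r₀, r₀ < (c' j').length ∧
          (∀ r, r ≤ r₀ → rowRel pr x (bottomGet (c' j') r)) ∧
          (r₀ < (c' (j + 1)).length → rowRel pr (bottomGet (c' (j + 1)) r₀) x) := by
        intro j' hj'
        have : j' = j := by omega
        subst this
        refine ⟨(c j').length - 1 - i, by rw [hlen']; omega, ?_, ?_⟩
        · intro r hr
          rw [hcj, bottomGet_set hi (by omega)]
          by_cases hrx : r = (c j').length - 1 - i
          · rw [if_pos hrx]; exact hxa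
          · rw [if_neg hrx]
            have hkr : i < (c j').length - 1 - r := by omega
            refine ⟨chain_le (hcol j') (le_of_lt hkr) (by omega), fun he => ?_⟩
            have hb2 : bumpCond pr a ((c j').getD ((c j').length - 1 - r) default) = true := by
              rw [show bottomGet (c j') r
                = (c j').getD ((c j').length - 1 - r) default from rfl] at he
              rw [← he]
              exact hbump
            have := hmax ((c j').length - 1 - r) (by omega) hb2
            omega
        · intro hlt
          rw [hlen'] at hlt
          rw [hc'def, Function.update_of_ne (by omega : j' + 1 ≠ j')]
          have := hrow j' ((c j').length - 1 - i) hlt (by omega)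
          rw [hbg_i] at this
          exact this
      obtain ⟨j₀, hj₀, h1, h2, h3, h4, h5⟩ := ih c' (j + 1) x hf hE' hcol' hrow' hdec' hprev'
      rw [hins]
      refine ⟨j₀, by omega, ?_, ?_, h3, h4, h5⟩
      · intro k hk
        rw [h1 k hk, hlen']
      · rw [h2, hlen']

end MainLemma
/-- reverse column insertion of a letter `a` into an `𝔸`-semistandard tableau
of anti-normal shape `λ^π` produces an `𝔸`-semistandard tableau of anti-normal shape `μ^π`
for a partition `μ ⊇ λ` with `|μ| = |λ| + 1`. -/
theorem stmt10 {A : Type*} [LinearOrder A] [Inhabited A] (pr : A → Bool)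
    (p : Ptn) (c : ℕ → List A) (hsh : hasShapePi p c) (hssyt : IsAntiSSYT pr c) (a : A) :
    ∃ q : Ptn,
      hasShapePi q (colInsert pr p c a) ∧
      IsAntiSSYT pr (colInsert pr p c a) ∧
      (∀ i, p.f i ≤ q.f i) ∧
      ∃ N₀, ∀ N, N₀ ≤ N →
        (∑ i ∈ Finset.range N, q.f i) = (∑ i ∈ Finset.range N, p.f i) + 1 := by
  have hpanti : Antitone p.f := antitone_nat_of_succ_le p.mono
  obtain ⟨Np, hNp⟩ := p.fin
  have hLzero : ∀ k, p.f 0 ≤ k → conjSeq p.f (k + 1) = 0 := by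
    intro k hk
    show Set.ncard _ = 0
    have hemp : {i : ℕ | k + 1 ≤ p.f i} = ∅ := by
      ext i
      simp only [Set.mem_setOf_eq, Set.mem_empty_iff_false, iff_false, not_le]
      have := hpanti (Nat.zero_le i)
      omega
    rw [hemp, Set.ncard_empty]
  have hE : c (0 + (p.f 0 + 2 - 1)) = [] := by
    have h0 : (c (p.f 0 + 1)).length = 0 := by rw [hsh]; exact hLzero _ (by omega)
    rw [show 0 + (p.f 0 + 2 - 1) = p.f 0 + 1 by omega]
    exact List.length_eq_zero_iff.mp h0
  obtain ⟨hcol, hrow⟩ := hssyt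
  have hdec : ∀ k, (c (k + 1)).length ≤ (c k).length := by
    intro k
    rw [hsh, hsh]
    apply Set.ncard_le_ncard
    · intro i hi
      simp only [Set.mem_setOf_eq] at hi ⊢
      omega
    · exact set_fin hNp k
  obtain ⟨j₀, hj₀, hlen, hlenj₀, hcol', hrow', hdec'⟩ :=
    insert_main pr (p.f 0 + 2) c 0 a (by omega) hE hcol hrow hdec
      (by intro j' h; omega)
  set M : ℕ → ℕ := fun k => ((insertAux pr (p.f 0 + 2) c 0 a) k).length with hM
  set J := max (p.f 0) (j₀ + 1) with hJ
  have hMk : ∀ k, k ≠ j₀ → M k = (c k).length := fun k hk => hlen k hk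
  have hMj₀ : M j₀ = (c j₀).length + 1 := hlenj₀
  have hMdec : ∀ k, M (k + 1) ≤ M k := hdec'
  have hManti : Antitone M := antitone_nat_of_succ_le hMdec
  have hMJ : ∀ k, J ≤ k → M k = 0 := by
    intro k hk
    rw [hMk k (by omega), hsh]
    exact hLzero k (by omega)
  have hLleM : ∀ k, (c k).length ≤ M k := by
    intro k
    rcases eq_or_ne k j₀ with rfl | hk
    · rw [hMj₀]; omega
    · rw [hMk k hk]
  have hqmono : ∀ i, conjSeq M (i + 1 + 1) ≤ conjSeq M (i + 1) := by
    intro i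
    apply Set.ncard_le_ncard
    · intro k hk
      simp only [Set.mem_setOf_eq] at hk ⊢
      omega
    · exact set_fin hMJ i
  have hqfin : ∃ N, ∀ i, N ≤ i → conjSeq M (i + 1) = 0 := by
    refine ⟨M 0, fun i hi => ?_⟩
    show Set.ncard _ = 0
    have hemp : {k : ℕ | i + 1 ≤ M k} = ∅ := by
      ext k
      simp only [Set.mem_setOf_eq, Set.mem_empty_iff_false, iff_false, not_le]
      have := hManti (Nat.zero_le k)
      omega
    rw [hemp, Set.ncard_empty]
  have hpif : ∀ i, p.f i = conjSeq (fun k => (c k).length) (i + 1) := by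
    intro i
    rw [show (fun k => (c k).length) = (fun k => conjSeq p.f (k + 1)) from funext hsh]
    exact (conj_dual p.mono hNp i).symm
  refine ⟨⟨fun i => conjSeq M (i + 1), hqmono, hqfin⟩, ?_, ⟨hcol', hrow'⟩, ?_, ?_⟩
  · intro j
    show ((insertAux pr (p.f 0 + 2) c 0 a) j).length
      = conjSeq (fun i => conjSeq M (i + 1)) (j + 1)
    rw [conj_dual hMdec hMJ j]
  · intro i
    rw [hpif i]
    show Set.ncard _ ≤ Set.ncard _
    apply Set.ncard_le_ncard
    · intro k hk
      simp only [Set.mem_setOf_eq] at hk ⊢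
      exact le_trans hk (hLleM k)
    · exact set_fin hMJ i
  · refine ⟨M 0, fun N hN => ?_⟩
    have hq : ∑ i ∈ Finset.range N, conjSeq M (i + 1) = ∑ k ∈ Finset.range J, M k :=
      sum_conj M J N hMJ (fun k => le_trans (hManti (Nat.zero_le k)) hN)
    have hLJ : ∀ k, J ≤ k → (c k).length = 0 := by
      intro k hk
      rw [hsh]; exact hLzero k (by omega)
    have hLN : ∀ k, (c k).length ≤ N := fun k =>
      le_trans (hLleM k) (le_trans (hManti (Nat.zero_le k)) hN)
    have hp : ∑ i ∈ Finset.range N, p.f i = ∑ k ∈ Finset.range J, (c k).length := by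
      calc ∑ i ∈ Finset.range N, p.f i
          = ∑ i ∈ Finset.range N, Set.ncard {k | i + 1 ≤ (c k).length} :=
            Finset.sum_congr rfl fun i _ => hpif i
        _ = ∑ k ∈ Finset.range J, (c k).length :=
            sum_conj (fun k => (c k).length) J N hLJ hLN
    show ∑ i ∈ Finset.range N, conjSeq M (i + 1) = (∑ i ∈ Finset.range N, p.f i) + 1
    rw [hq, hp]
    have hsplit : ∀ k ∈ Finset.range J, M k = (c k).length + if k = j₀ then 1 else 0 := by
      intro k _
      rcases eq_or_ne k j₀ with rfl | hk
      · rw [hMj₀, if_pos rfl]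
      · rw [hMk k hk, if_neg hk]
        omega
    rw [Finset.sum_congr rfl hsplit, Finset.sum_add_distrib,
      Finset.sum_ite_eq' (Finset.range J) j₀ (fun _ => 1),
      if_pos (Finset.mem_range.mpr (by omega))]

end AntiNormal
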